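/- For the left module action with λ₀ε + λ₁r = −ℏ, the sesquilinear form (ξ,η)_L = Σ_k ∫_ℝ ξ(x,k) conj(η(x,k)) dx satisfies (f·ξ, η)_L = (ξ, f*·η)_L for all f in the algebra. -/

import Mathlib

open MeasureTheory

/-- The involution `(f*)_n(u) = conj (f_{-n}(u + nℏ))`. -/
noncomputable def ncStar (ℏ : ℝ) (f : ℤ → ℝ → ℂ) : ℤ → ℝ → ℂ :=
  fun n u => starRingEnd ℂ (f (-n) (u + n * ℏ))

/-- The left action `(f·ξ)(x,k) = ∑_n f_n(λ₀x + λ₁k) ξ(x − nε, k − nr)`. -/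
noncomputable def leftAct (l0 l1 ε : ℝ) (r : ℤ) (f : ℤ → ℝ → ℂ) (ξ : ℝ → ℤ → ℂ) :
    ℝ → ℤ → ℂ :=
  fun x k => ∑' n : ℤ, f n (l0 * x + l1 * k) * ξ (x - n * ε) (k - n * r)

/-- The sesquilinear form `(ξ,η)_L = ∑_k ∫ ξ(x,k) conj(η(x,k)) dx`. -/
noncomputable def innL (ξ η : ℝ → ℤ → ℂ) : ℂ :=
  ∑' k : ℤ, ∫ x : ℝ, ξ x k * starRingEnd ℂ (η x k)

/-- Schwartz-type decay on `ℝ × ℤ`: continuity in `x` and rapid joint decay. -/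
def NCDecay (ξ : ℝ → ℤ → ℂ) : Prop :=
  (∀ k : ℤ, Continuous fun x => ξ x k) ∧
  ∀ N : ℕ, ∃ C : ℝ, ∀ (x : ℝ) (k : ℤ),
    (1 + |x| + |(k : ℝ)|) ^ N * ‖ξ x k‖ ≤ C

noncomputable def PP (l0 l1 ε : ℝ) (r : ℤ) (F : ℤ → ℝ → ℂ) (ξ η : ℝ → ℤ → ℂ)
    (n : ℤ) (x : ℝ) (k : ℤ) : ℂ :=
  F n (l0 * x + l1 * k) * ξ (x - n * ε) (k - n * r) * starRingEnd ℂ (η x k)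

noncomputable def QQ (hb l0 l1 ε : ℝ) (r : ℤ) (F : ℤ → ℝ → ℂ) (ξ η : ℝ → ℤ → ℂ)
    (n : ℤ) (x : ℝ) (k : ℤ) : ℂ :=
  ξ x k * (F n (l0 * x + l1 * k - n * hb) * starRingEnd ℂ (η (x + n * ε) (k + n * r)))

lemma NCDecay.bdd {ξ : ℝ → ℤ → ℂ} (hξ : NCDecay ξ) :
    ∃ C : ℝ, 0 ≤ C ∧ ∀ (x : ℝ) (k : ℤ), ‖ξ x k‖ ≤ C := by
  obtain ⟨C, hC⟩ := hξ.2 0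
  have h00 : ‖ξ 0 0‖ ≤ C := by simpa using hC 0 0
  exact ⟨C, le_trans (norm_nonneg _) h00, fun x k => by simpa using hC x k⟩

lemma NCDecay.decay4 {ξ : ℝ → ℤ → ℂ} (hξ : NCDecay ξ) :
    ∃ C : ℝ, 0 ≤ C ∧ ∀ (x : ℝ) (k : ℤ),
      ‖ξ x k‖ * ((1 + |x|) ^ 2 * (1 + |(k : ℝ)|) ^ 2) ≤ C := by
  obtain ⟨C, hC⟩ := hξ.2 4
  refine ⟨C, ?_, fun x k => ?_⟩
  · have h := hC 0 0
    have h0 : (0:ℝ) ≤ ‖ξ 0 0‖ := norm_nonneg _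
    simp only [abs_zero, Int.cast_zero, add_zero] at h
    nlinarith
  · have h1 : (0:ℝ) ≤ ‖ξ x k‖ := norm_nonneg _
    have hx : (0:ℝ) ≤ |x| := abs_nonneg x
    have hk : (0:ℝ) ≤ |(k:ℝ)| := abs_nonneg _
    have key : (1 + |x|) ^ 2 * (1 + |(k : ℝ)|) ^ 2 ≤ (1 + |x| + |(k:ℝ)|) ^ 4 := by
      nlinarith [sq_nonneg (|x| * |(k:ℝ)|), sq_nonneg (|x| + |(k:ℝ)|), sq_nonneg (|x| - |(k:ℝ)|),
        mul_nonneg hx hk]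
    calc ‖ξ x k‖ * ((1 + |x|) ^ 2 * (1 + |(k : ℝ)|) ^ 2)
        ≤ ‖ξ x k‖ * (1 + |x| + |(k:ℝ)|) ^ 4 :=
          mul_le_mul_of_nonneg_left key h1
      _ ≤ C := by rw [mul_comm]; exact hC x k

lemma schwartz_bdd (g : SchwartzMap ℝ ℂ) : ∃ C : ℝ, 0 ≤ C ∧ ∀ y : ℝ, ‖g y‖ ≤ C := by
  obtain ⟨C, hC, h⟩ := g.decay 0 0
  refine ⟨C, hC.le, fun y => ?_⟩
  simpa using h y

lemma summable_base : Summable (fun k : ℤ => ((1 + |(k : ℝ)|) ^ 2)⁻¹) := by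
  have hs : Summable (fun k : ℤ => 1 / (k : ℝ) ^ 2) := Real.summable_one_div_int_pow.2 one_lt_two
  refine Summable.of_norm_bounded_eventually hs ?_
  rw [Filter.eventually_cofinite]
  refine (Set.finite_singleton (0:ℤ)).subset ?_
  intro k hk
  simp only [Set.mem_setOf_eq, not_le] at hk
  by_contra h0
  apply hk.not_ge
  have hk0 : k ≠ 0 := h0
  have hk1 : (1:ℝ) ≤ |(k:ℝ)| := by
    rw [← Int.cast_abs]
    exact_mod_cast Int.one_le_abs hk0
  have hpos : (0:ℝ) < (k:ℝ) ^ 2 := by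
    have : |(k:ℝ)| ^ 2 = (k:ℝ) ^ 2 := sq_abs _
    nlinarith
  have hle : (k:ℝ) ^ 2 ≤ (1 + |(k:ℝ)|) ^ 2 := by nlinarith [sq_abs (k:ℝ)]
  rw [Real.norm_eq_abs, abs_of_nonneg (by positivity), one_div]
  exact inv_anti₀ hpos hle

lemma integrable_base (c : ℝ) : Integrable (fun x : ℝ => c * ((1 + |x|) ^ 2)⁻¹) := by
  have hcont : Continuous (fun x : ℝ => c * ((1 + |x|) ^ 2)⁻¹) :=
    continuous_const.mul (((continuous_const.add continuous_abs).pow 2).inv₀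
      (fun x => (by positivity : (1 + |x|) ^ 2 ≠ 0)))
  refine (integrable_inv_one_add_sq.const_mul |c|).mono' hcont.aestronglyMeasurable ?_
  refine Filter.Eventually.of_forall fun x => ?_
  have h1 : (1:ℝ) + x ^ 2 ≤ (1 + |x|) ^ 2 := by nlinarith [abs_nonneg x, sq_abs x]
  have h2 : ((1 + |x|) ^ 2)⁻¹ ≤ ((1:ℝ) + x ^ 2)⁻¹ := inv_anti₀ (by positivity) h1
  rw [Real.norm_eq_abs, abs_mul, abs_of_nonneg (show (0:ℝ) ≤ ((1 + |x|) ^ 2)⁻¹ by positivity)]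
  exact mul_le_mul_of_nonneg_left h2 (abs_nonneg c)

lemma step (P : ℝ → ℤ → ℂ) (hc : ∀ k : ℤ, Continuous fun x => P x k) (B : ℝ)
    (hB : ∀ (x : ℝ) (k : ℤ), ‖P x k‖ * ((1 + |x|) ^ 2 * (1 + |(k : ℝ)|) ^ 2) ≤ B) :
    (∀ k : ℤ, Integrable (fun x => P x k)) ∧ Summable (fun k : ℤ => ∫ x : ℝ, P x k) := by
  have hbound : ∀ (x : ℝ) (k : ℤ),
      ‖P x k‖ ≤ (B * ((1 + |(k:ℝ)|) ^ 2)⁻¹) * ((1 + |x|) ^ 2)⁻¹ := by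
    intro x k
    have hpos : (0:ℝ) < (1 + |x|) ^ 2 * (1 + |(k:ℝ)|) ^ 2 := by positivity
    rw [show (B * ((1 + |(k:ℝ)|) ^ 2)⁻¹) * ((1 + |x|) ^ 2)⁻¹
        = B / ((1 + |x|) ^ 2 * (1 + |(k:ℝ)|) ^ 2) by field_simp]
    rw [le_div_iff₀ hpos]
    exact hB x k
  have hint : ∀ k : ℤ, Integrable (fun x => P x k) := by
    intro k
    exact (integrable_base _).mono' (hc k).aestronglyMeasurable
      (Filter.Eventually.of_forall fun x => hbound x k)
  refine ⟨hint, ?_⟩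
  set I : ℝ := ∫ x : ℝ, ((1 + |x|) ^ 2)⁻¹ with hI
  have hnorm : ∀ k : ℤ, ‖∫ x : ℝ, P x k‖ ≤ (B * I) * ((1 + |(k:ℝ)|) ^ 2)⁻¹ := by
    intro k
    have h1 : ‖∫ x : ℝ, P x k‖ ≤ ∫ x : ℝ, (B * ((1 + |(k:ℝ)|) ^ 2)⁻¹) * ((1 + |x|) ^ 2)⁻¹ :=
      norm_integral_le_of_norm_le (integrable_base _)
        (Filter.Eventually.of_forall fun x => hbound x k)
    calc ‖∫ x : ℝ, P x k‖ ≤ _ := h1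
      _ = (B * ((1 + |(k:ℝ)|) ^ 2)⁻¹) * I := by rw [integral_const_mul]
      _ = (B * I) * ((1 + |(k:ℝ)|) ^ 2)⁻¹ := by ring
  exact Summable.of_norm_bounded (summable_base.mul_left (B * I)) hnorm


theorem leftAct_adjoint (ℏ l0 l1 ε : ℝ) (r : ℤ) (hpar : l0 * ε + l1 * r = -ℏ)
    (f : ℤ → SchwartzMap ℝ ℂ) (hf : (Function.support f).Finite)
    (ξ η : ℝ → ℤ → ℂ) (hξ : NCDecay ξ) (hη : NCDecay η) :
    innL (leftAct l0 l1 ε r (fun n => ⇑(f n)) ξ) η =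
      innL ξ (leftAct l0 l1 ε r (ncStar ℏ (fun n => ⇑(f n))) η) := by
  classical
  set F : ℤ → ℝ → ℂ := fun n => ⇑(f n) with hF
  set s : Finset ℤ := hf.toFinset with hs
  obtain ⟨Cx0, hCx0, hCx0'⟩ := hξ.bdd
  obtain ⟨Cx4, hCx4, hCx4'⟩ := hξ.decay4
  obtain ⟨Ce0, hCe0, hCe0'⟩ := hη.bdd
  obtain ⟨Ce4, hCe4, hCe4'⟩ := hη.decay4
  -- zero outside support
  have hF0 : ∀ n : ℤ, n ∉ s → F n = 0 := by
    intro n hn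
    have : f n = 0 := by
      by_contra h
      exact hn (hf.mem_toFinset.2 h)
    simp [hF, this]
  -- continuity of P and Q slices
  have hcP : ∀ (n k : ℤ), Continuous fun x => PP l0 l1 ε r F ξ η n x k := by
    intro n k
    refine (((f n).continuous.comp (by continuity)).mul
      ((hξ.1 (k - n * r)).comp (continuous_id.sub continuous_const))).mul ?_
    exact Complex.continuous_conj.comp (hη.1 k)
  have hcQ : ∀ (n k : ℤ), Continuous fun x => QQ ℏ l0 l1 ε r F ξ η n x k := by
    intro n k
    refine (hξ.1 k).mul (((f n).continuous.comp (by continuity)).mul ?_)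
    exact Complex.continuous_conj.comp ((hη.1 (k + n * r)).comp (continuous_id.add continuous_const))
  -- bounds
  have hBP : ∀ n : ℤ, ∃ B : ℝ, ∀ (x : ℝ) (k : ℤ),
      ‖PP l0 l1 ε r F ξ η n x k‖ * ((1 + |x|) ^ 2 * (1 + |(k : ℝ)|) ^ 2) ≤ B := by
    intro n
    obtain ⟨Cf, hCf, hCf'⟩ := schwartz_bdd (f n)
    refine ⟨Cf * Cx0 * Ce4, fun x k => ?_⟩
    have habs : ‖PP l0 l1 ε r F ξ η n x k‖
        = ‖F n (l0 * x + l1 * k)‖ * ‖ξ (x - n * ε) (k - n * r)‖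
          * ‖η x k‖ := by
      simp [PP, map_mul, Complex.norm_conj]
    rw [habs]
    have h1 : ‖F n (l0 * x + l1 * k)‖ ≤ Cf := hCf' _
    have h2 : ‖ξ (x - n * ε) (k - n * r)‖ ≤ Cx0 := hCx0' _ _
    have h3 : ‖η x k‖ * ((1 + |x|) ^ 2 * (1 + |(k : ℝ)|) ^ 2) ≤ Ce4 := hCe4' _ _
    have ha : (0:ℝ) ≤ ‖F n (l0 * x + l1 * k)‖ := norm_nonneg _
    have hb : (0:ℝ) ≤ ‖ξ (x - n * ε) (k - n * r)‖ := norm_nonneg _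
    have hc : (0:ℝ) ≤ ‖η x k‖ * ((1 + |x|) ^ 2 * (1 + |(k : ℝ)|) ^ 2) := by positivity
    calc ‖F n (l0 * x + l1 * k)‖ * ‖ξ (x - n * ε) (k - n * r)‖
          * ‖η x k‖ * ((1 + |x|) ^ 2 * (1 + |(k : ℝ)|) ^ 2)
        = (‖F n (l0 * x + l1 * k)‖ * ‖ξ (x - n * ε) (k - n * r)‖)
          * (‖η x k‖ * ((1 + |x|) ^ 2 * (1 + |(k : ℝ)|) ^ 2)) := by ring
      _ ≤ (Cf * Cx0) * Ce4 :=
          mul_le_mul (mul_le_mul h1 h2 hb hCf) h3 hc (by positivity)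
      _ = Cf * Cx0 * Ce4 := by ring
  have hBQ : ∀ n : ℤ, ∃ B : ℝ, ∀ (x : ℝ) (k : ℤ),
      ‖QQ ℏ l0 l1 ε r F ξ η n x k‖ * ((1 + |x|) ^ 2 * (1 + |(k : ℝ)|) ^ 2) ≤ B := by
    intro n
    obtain ⟨Cf, hCf, hCf'⟩ := schwartz_bdd (f n)
    refine ⟨Cx4 * (Cf * Ce0), fun x k => ?_⟩
    have habs : ‖QQ ℏ l0 l1 ε r F ξ η n x k‖
        = ‖ξ x k‖ * (‖F n (l0 * x + l1 * k - n * ℏ)‖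
          * ‖η (x + n * ε) (k + n * r)‖) := by
      simp [QQ, map_mul, Complex.norm_conj]
    rw [habs]
    have h1 : ‖ξ x k‖ * ((1 + |x|) ^ 2 * (1 + |(k : ℝ)|) ^ 2) ≤ Cx4 := hCx4' _ _
    have h2 : ‖F n (l0 * x + l1 * k - n * ℏ)‖ ≤ Cf := hCf' _
    have h3 : ‖η (x + n * ε) (k + n * r)‖ ≤ Ce0 := hCe0' _ _
    have hb2 : (0:ℝ) ≤ ‖F n (l0 * x + l1 * k - n * ℏ)‖ := norm_nonneg _
    have hb3 : (0:ℝ) ≤ ‖η (x + n * ε) (k + n * r)‖ := norm_nonneg _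
    calc ‖ξ x k‖ * (‖F n (l0 * x + l1 * k - n * ℏ)‖
          * ‖η (x + n * ε) (k + n * r)‖) * ((1 + |x|) ^ 2 * (1 + |(k : ℝ)|) ^ 2)
        = (‖ξ x k‖ * ((1 + |x|) ^ 2 * (1 + |(k : ℝ)|) ^ 2))
          * (‖F n (l0 * x + l1 * k - n * ℏ)‖
            * ‖η (x + n * ε) (k + n * r)‖) := by ring
      _ ≤ Cx4 * (Cf * Ce0) :=
          mul_le_mul h1 (mul_le_mul h2 h3 hb3 hCf) (by positivity) hCx4
  -- integrability and summability
  have hstepP : ∀ n : ℤ, (∀ k : ℤ, Integrable fun x => PP l0 l1 ε r F ξ η n x k)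
      ∧ Summable fun k : ℤ => ∫ x : ℝ, PP l0 l1 ε r F ξ η n x k := by
    intro n
    obtain ⟨B, hB⟩ := hBP n
    exact step _ (hcP n) B hB
  have hstepQ : ∀ n : ℤ, (∀ k : ℤ, Integrable fun x => QQ ℏ l0 l1 ε r F ξ η n x k)
      ∧ Summable fun k : ℤ => ∫ x : ℝ, QQ ℏ l0 l1 ε r F ξ η n x k := by
    intro n
    obtain ⟨B, hB⟩ := hBQ n
    exact step _ (hcQ n) B hB
  -- LHS
  have hLHS : innL (leftAct l0 l1 ε r F ξ) η
      = ∑ n ∈ s, ∑' k : ℤ, ∫ x : ℝ, PP l0 l1 ε r F ξ η n x k := by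
    calc innL (leftAct l0 l1 ε r F ξ) η
        = ∑' k : ℤ, ∫ x : ℝ, ∑ n ∈ s, PP l0 l1 ε r F ξ η n x k := by
          refine tsum_congr fun k => ?_
          refine integral_congr_ae (Filter.Eventually.of_forall fun x => ?_)
          show (∑' n : ℤ, F n (l0 * x + l1 * k) * ξ (x - n * ε) (k - n * r))
              * starRingEnd ℂ (η x k) = _
          rw [tsum_eq_sum (s := s) (fun n hn => by simp [hF0 n hn]), Finset.sum_mul]
          rfl
      _ = ∑' k : ℤ, ∑ n ∈ s, ∫ x : ℝ, PP l0 l1 ε r F ξ η n x k :=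
          tsum_congr fun k => integral_finset_sum s fun n _ => (hstepP n).1 k
      _ = ∑ n ∈ s, ∑' k : ℤ, ∫ x : ℝ, PP l0 l1 ε r F ξ η n x k :=
          Summable.tsum_finsetSum fun n _ => (hstepP n).2
  -- RHS
  have hRHS : innL ξ (leftAct l0 l1 ε r (ncStar ℏ F) η)
      = ∑ n ∈ s, ∑' k : ℤ, ∫ x : ℝ, QQ ℏ l0 l1 ε r F ξ η n x k := by
    calc innL ξ (leftAct l0 l1 ε r (ncStar ℏ F) η)
        = ∑' k : ℤ, ∫ x : ℝ, ∑ n ∈ s, QQ ℏ l0 l1 ε r F ξ η n x k := by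
          refine tsum_congr fun k => ?_
          refine integral_congr_ae (Filter.Eventually.of_forall fun x => ?_)
          show ξ x k * starRingEnd ℂ (∑' m : ℤ,
              ncStar ℏ F m (l0 * x + l1 * k) * η (x - m * ε) (k - m * r)) = _
          rw [tsum_eq_sum (s := s.image (fun n => -n)) ?hzero]
          case hzero =>
            intro m hm
            have hms : -m ∉ s := by
              intro hc
              exact hm (Finset.mem_image.2 ⟨-m, hc, neg_neg m⟩)
            simp [ncStar, hF0 _ hms]
          rw [Finset.sum_image (fun a _ b _ h => neg_injective h)]
          rw [map_sum, Finset.mul_sum]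
          refine Finset.sum_congr rfl fun n _ => ?_
          simp only [ncStar, QQ, map_mul, Complex.conj_conj, neg_neg, Int.cast_neg,
            neg_mul, sub_neg_eq_add, ← sub_eq_add_neg]
      _ = ∑' k : ℤ, ∑ n ∈ s, ∫ x : ℝ, QQ ℏ l0 l1 ε r F ξ η n x k :=
          tsum_congr fun k => integral_finset_sum s fun n _ => (hstepQ n).1 k
      _ = ∑ n ∈ s, ∑' k : ℤ, ∫ x : ℝ, QQ ℏ l0 l1 ε r F ξ η n x k :=
          Summable.tsum_finsetSum fun n _ => (hstepQ n).2
  rw [hLHS, hRHS]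
  refine Finset.sum_congr rfl fun n _ => ?_
  -- change of variables in x and reindexing in k
  calc (∑' k : ℤ, ∫ x : ℝ, PP l0 l1 ε r F ξ η n x k)
      = ∑' k : ℤ, ∫ x : ℝ, PP l0 l1 ε r F ξ η n (x + n * ε) k := by
        refine tsum_congr fun k => ?_
        exact (integral_add_right_eq_self (fun x => PP l0 l1 ε r F ξ η n x k) ((n : ℝ) * ε)).symm
    _ = ∑' k : ℤ, ∫ x : ℝ, PP l0 l1 ε r F ξ η n (x + n * ε) (k + n * r) := by
        exact ((Equiv.addRight (n * r)).tsum_eq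
          fun k => ∫ x : ℝ, PP l0 l1 ε r F ξ η n (x + n * ε) k).symm
    _ = ∑' k : ℤ, ∫ x : ℝ, QQ ℏ l0 l1 ε r F ξ η n x k := by
        refine tsum_congr fun k => ?_
        refine integral_congr_ae (Filter.Eventually.of_forall fun x => ?_)
        show F n (l0 * (x + n * ε) + l1 * ((k + n * r : ℤ) : ℝ))
            * ξ (x + n * ε - n * ε) (k + n * r - n * r)
            * starRingEnd ℂ (η (x + n * ε) (k + n * r)) = _
        have harg : l0 * (x + n * ε) + l1 * ((k + n * r : ℤ) : ℝ)
            = l0 * x + l1 * k - n * ℏ := by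
          push_cast
          linear_combination (n : ℝ) * hpar
        rw [harg, add_sub_cancel_right, add_sub_cancel_right]
        show F n (l0 * x + l1 * k - n * ℏ) * ξ x k * starRingEnd ℂ (η (x + n * ε) (k + n * r))
            = ξ x k * (F n (l0 * x + l1 * k - n * ℏ)
              * starRingEnd ℂ (η (x + n * ε) (k + n * r)))
        ring
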